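/- Let m ≥ 1 and let G[X,Y] be a bipartite multigraph on finite disjoint vertex sets X and Y in which every edge has multiplicity at least m (for all x, y, either e_G(x,y) = 0 or e_G(x,y) ≥ m). Let g assign natural numbers to X, let f assign natural numbers to Y with f(y) ≤ m for all y ∈ Y, and suppose ∑_{y∈N_G(S)} f(y) ≥ ∑_{x∈S} g(x) for every S ⊆ X. Then for every A ⊆ X and B ⊆ Y, setting S := {x ∈ A : g(x) ≥ e_G(x, Y∖B)}, one has ∑_{x∈S} g(x) ≤ ∑_{y∈B} f(y) + e_G(S, Y∖B), where e_G(S, Y∖B) := ∑_{x∈S} ∑_{y∈Y∖B} e_G(x,y). -/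
import Mathlib


/-- The key inequality in the proof of Corollary 4: under the Hall-type
condition, for all `A ⊆ X`, `B ⊆ Y`, with `S = {x ∈ A : g(x) ≥ e_G(x, Y∖B)}`,
one has `g(S) ≤ f(B) + e_G(S, Y∖B)`. -/
theorem hall_condition_key_inequality
    {X Y : Type*} [Fintype X] [Fintype Y] [DecidableEq X] [DecidableEq Y]
    (m : ℕ) (hm : 1 ≤ m) (eG : X → Y → ℕ)
    (hmult : ∀ x y, eG x y = 0 ∨ m ≤ eG x y)
    (g : X → ℕ) (f : Y → ℕ)
    (hfm : ∀ y : Y, f y ≤ m)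
    (hhall : ∀ S : Finset X,
      ∑ x ∈ S, g x ≤
        ∑ y ∈ Finset.univ.filter (fun y : Y => ∃ x ∈ S, 0 < eG x y), f y) :
    ∀ (A : Finset X) (B : Finset Y),
      ∑ x ∈ A.filter (fun x => ∑ y ∈ Bᶜ, eG x y ≤ g x), g x ≤
        ∑ y ∈ B, f y +
          ∑ x ∈ A.filter (fun x => ∑ y ∈ Bᶜ, eG x y ≤ g x), ∑ y ∈ Bᶜ, eG x y := by
  intro A B
  set S := A.filter (fun x => ∑ y ∈ Bᶜ, eG x y ≤ g x) with hS
  set N := Finset.univ.filter (fun y : Y => ∃ x ∈ S, 0 < eG x y) with hN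
  calc ∑ x ∈ S, g x ≤ ∑ y ∈ N, f y := hhall S
    _ = ∑ y ∈ N.filter (· ∈ B), f y + ∑ y ∈ N.filter (· ∉ B), f y :=
        (Finset.sum_filter_add_sum_filter_not N (· ∈ B) f).symm
    _ ≤ ∑ y ∈ B, f y + ∑ x ∈ S, ∑ y ∈ Bᶜ, eG x y := by
        gcongr
        · intro y hy
          exact (Finset.mem_filter.mp hy).2
        · calc ∑ y ∈ N.filter (· ∉ B), f y
              ≤ ∑ y ∈ N.filter (· ∉ B), ∑ x ∈ S, eG x y := by
                apply Finset.sum_le_sum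
                intro y hy
                obtain ⟨hyN, -⟩ := Finset.mem_filter.mp hy
                obtain ⟨x, hxS, hx⟩ := (Finset.mem_filter.mp hyN).2
                calc f y ≤ m := hfm y
                  _ ≤ eG x y := (hmult x y).resolve_left (by omega)
                  _ ≤ ∑ x ∈ S, eG x y := Finset.single_le_sum (f := fun x => eG x y) (fun _ _ => Nat.zero_le _) hxS
            _ ≤ ∑ y ∈ Bᶜ, ∑ x ∈ S, eG x y := by
                apply Finset.sum_le_sum_of_subset
                intro y hy
                simp only [Finset.mem_compl]
                exact (Finset.mem_filter.mp hy).2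
            _ = ∑ x ∈ S, ∑ y ∈ Bᶜ, eG x y := Finset.sum_comm
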